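/- For any real numbers f₋₂, f₋₁, f₀, f₁, f₂, any x_i ∈ ℝ and any Δx > 0, there exists a unique polynomial P of degree at most 4 such that (1/Δx)∫ over the cell [x_i+(j−1/2)Δx, x_i+(j+1/2)Δx] of P equals f_j for every j ∈ {−2,−1,0,1,2}; moreover this P satisfies P(x_i + Δx/2) = (1/60)(2f₋₂ − 13f₋₁ + 47f₀ + 27f₁ − 3f₂). -/

import Mathlib

open intervalIntegral Polynomial

/-- `P` reproduces the cell averages `fm2, fm1, f0, f1, f2` on the five cells
`[x_i + (j−1/2)Δx, x_i + (j+1/2)Δx]`, `j = −2,…,2`. -/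
def MatchesCellAverages (P : Polynomial ℝ) (fm2 fm1 f0 f1 f2 xi Δx : ℝ) : Prop :=
    ((1/Δx) * ∫ ξ in (xi + ((-2:ℝ) - 1/2)*Δx)..(xi + ((-2:ℝ) + 1/2)*Δx), P.eval ξ) = fm2
  ∧ ((1/Δx) * ∫ ξ in (xi + ((-1:ℝ) - 1/2)*Δx)..(xi + ((-1:ℝ) + 1/2)*Δx), P.eval ξ) = fm1
  ∧ ((1/Δx) * ∫ ξ in (xi + ((0:ℝ) - 1/2)*Δx)..(xi + ((0:ℝ) + 1/2)*Δx), P.eval ξ) = f0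
  ∧ ((1/Δx) * ∫ ξ in (xi + ((1:ℝ) - 1/2)*Δx)..(xi + ((1:ℝ) + 1/2)*Δx), P.eval ξ) = f1
  ∧ ((1/Δx) * ∫ ξ in (xi + ((2:ℝ) - 1/2)*Δx)..(xi + ((2:ℝ) + 1/2)*Δx), P.eval ξ) = f2

private lemma integral_poly5 (Q : Polynomial ℝ) (hQ : Q.natDegree < 5) (a b : ℝ) :
    ∫ t in a..b, Q.eval t =
      Q.coeff 0 * (b - a) + Q.coeff 1 * (b^2 - a^2)/2 + Q.coeff 2 * (b^3 - a^3)/3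
      + Q.coeff 3 * (b^4 - a^4)/4 + Q.coeff 4 * (b^5 - a^5)/5 := by
  set F : Polynomial ℝ := C (Q.coeff 0) * X + C (Q.coeff 1 / 2) * X^2 + C (Q.coeff 2 / 3) * X^3
      + C (Q.coeff 3 / 4) * X^4 + C (Q.coeff 4 / 5) * X^5 with hF
  have hd : ∀ x : ℝ, HasDerivAt (fun t => F.eval t) (Q.eval x) x := by
    intro x
    have h1 := F.hasDerivAt x
    have h2 : F.derivative.eval x = Q.eval x := by
      rw [Polynomial.eval_eq_sum_range' hQ]
      simp [hF, Finset.sum_range_succ]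
      ring
    rwa [h2] at h1
  rw [intervalIntegral.integral_eq_sub_of_hasDerivAt (fun x _ => hd x)
      ((Q.continuous).intervalIntegrable a b)]
  simp [hF]
  ring

/-- Normalized cell-average conditions on unit cells centered at −2,…,2. -/
private def NM (Q : Polynomial ℝ) (fm2 fm1 f0 f1 f2 : ℝ) : Prop :=
    (∫ t in (-(5:ℝ)/2)..(-(3:ℝ)/2), Q.eval t) = fm2
  ∧ (∫ t in (-(3:ℝ)/2)..(-(1:ℝ)/2), Q.eval t) = fm1
  ∧ (∫ t in (-(1:ℝ)/2)..((1:ℝ)/2), Q.eval t) = f0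
  ∧ (∫ t in ((1:ℝ)/2)..((3:ℝ)/2), Q.eval t) = f1
  ∧ (∫ t in ((3:ℝ)/2)..((5:ℝ)/2), Q.eval t) = f2

private lemma NM_coeffs {Q : Polynomial ℝ} {fm2 fm1 f0 f1 f2 : ℝ}
    (hQ : Q.natDegree < 5) (h : NM Q fm2 fm1 f0 f1 f2) :
    Q.coeff 0 = (3/640)*fm2 - (29/480)*fm1 + (1067/960)*f0 - (29/480)*f1 + (3/640)*f2
  ∧ Q.coeff 1 = (5/48)*fm2 - (17/24)*fm1 + (17/24)*f1 - (5/48)*f2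
  ∧ Q.coeff 2 = -(1/16)*fm2 + (3/4)*fm1 - (11/8)*f0 + (3/4)*f1 - (1/16)*f2
  ∧ Q.coeff 3 = -(1/12)*fm2 + (1/6)*fm1 - (1/6)*f1 + (1/12)*f2
  ∧ Q.coeff 4 = (1/24)*fm2 - (1/6)*fm1 + (1/4)*f0 - (1/6)*f1 + (1/24)*f2 := by
  obtain ⟨h1, h2, h3, h4, h5⟩ := h
  rw [integral_poly5 Q hQ] at h1 h2 h3 h4 h5
  refine ⟨?_, ?_, ?_, ?_, ?_⟩
  · linear_combination (3/640)*h1 - (29/480)*h2 + (1067/960)*h3 - (29/480)*h4 + (3/640)*h5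
  · linear_combination (5/48)*h1 - (17/24)*h2 + (17/24)*h4 - (5/48)*h5
  · linear_combination -(1/16)*h1 + (3/4)*h2 - (11/8)*h3 + (3/4)*h4 - (1/16)*h5
  · linear_combination -(1/12)*h1 + (1/6)*h2 - (1/6)*h4 + (1/12)*h5
  · linear_combination (1/24)*h1 - (1/6)*h2 + (1/4)*h3 - (1/6)*h4 + (1/24)*h5

private lemma NM_eval {Q : Polynomial ℝ} {fm2 fm1 f0 f1 f2 : ℝ}
    (hQ : Q.natDegree < 5) (h : NM Q fm2 fm1 f0 f1 f2) :
    Q.eval (1/2) = (1/60) * (2*fm2 - 13*fm1 + 47*f0 + 27*f1 - 3*f2) := by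
  obtain ⟨c0, c1, c2, c3, c4⟩ := NM_coeffs hQ h
  rw [Polynomial.eval_eq_sum_range' hQ]
  simp only [Finset.sum_range_succ, Finset.sum_range_zero]
  rw [c0, c1, c2, c3, c4]
  ring

private lemma NM_unique {Q₁ Q₂ : Polynomial ℝ} {fm2 fm1 f0 f1 f2 : ℝ}
    (hQ₁ : Q₁.natDegree < 5) (hQ₂ : Q₂.natDegree < 5)
    (h₁ : NM Q₁ fm2 fm1 f0 f1 f2) (h₂ : NM Q₂ fm2 fm1 f0 f1 f2) : Q₁ = Q₂ := by
  obtain ⟨a0, a1, a2, a3, a4⟩ := NM_coeffs hQ₁ h₁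
  obtain ⟨b0, b1, b2, b3, b4⟩ := NM_coeffs hQ₂ h₂
  ext n
  rcases lt_or_ge n 5 with hn | hn
  · interval_cases n <;> simp_all
  · rw [Polynomial.coeff_eq_zero_of_natDegree_lt (lt_of_lt_of_le hQ₁ hn),
        Polynomial.coeff_eq_zero_of_natDegree_lt (lt_of_lt_of_le hQ₂ hn)]

private noncomputable def Qsol (fm2 fm1 f0 f1 f2 : ℝ) : Polynomial ℝ :=
    C ((3/640)*fm2 - (29/480)*fm1 + (1067/960)*f0 - (29/480)*f1 + (3/640)*f2)
    + C ((5/48)*fm2 - (17/24)*fm1 + (17/24)*f1 - (5/48)*f2) * X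
    + C (-(1/16)*fm2 + (3/4)*fm1 - (11/8)*f0 + (3/4)*f1 - (1/16)*f2) * X^2
    + C (-(1/12)*fm2 + (1/6)*fm1 - (1/6)*f1 + (1/12)*f2) * X^3
    + C ((1/24)*fm2 - (1/6)*fm1 + (1/4)*f0 - (1/6)*f1 + (1/24)*f2) * X^4

private lemma Qsol_natDegree (fm2 fm1 f0 f1 f2 : ℝ) :
    (Qsol fm2 fm1 f0 f1 f2).natDegree < 5 := by
  have h : (Qsol fm2 fm1 f0 f1 f2).natDegree ≤ 4 := by
    unfold Qsol; compute_degree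
  omega

private lemma Qsol_coeff (fm2 fm1 f0 f1 f2 : ℝ) :
    (Qsol fm2 fm1 f0 f1 f2).coeff 0
      = (3/640)*fm2 - (29/480)*fm1 + (1067/960)*f0 - (29/480)*f1 + (3/640)*f2
  ∧ (Qsol fm2 fm1 f0 f1 f2).coeff 1 = (5/48)*fm2 - (17/24)*fm1 + (17/24)*f1 - (5/48)*f2
  ∧ (Qsol fm2 fm1 f0 f1 f2).coeff 2 = -(1/16)*fm2 + (3/4)*fm1 - (11/8)*f0 + (3/4)*f1 - (1/16)*f2
  ∧ (Qsol fm2 fm1 f0 f1 f2).coeff 3 = -(1/12)*fm2 + (1/6)*fm1 - (1/6)*f1 + (1/12)*f2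
  ∧ (Qsol fm2 fm1 f0 f1 f2).coeff 4
      = (1/24)*fm2 - (1/6)*fm1 + (1/4)*f0 - (1/6)*f1 + (1/24)*f2 := by
  refine ⟨?_, ?_, ?_, ?_, ?_⟩ <;>
  · unfold Qsol
    simp only [Polynomial.coeff_add, Polynomial.coeff_C_mul, Polynomial.coeff_X_pow,
      Polynomial.coeff_C, Polynomial.coeff_X]
    norm_num

private lemma Qsol_NM (fm2 fm1 f0 f1 f2 : ℝ) :
    NM (Qsol fm2 fm1 f0 f1 f2) fm2 fm1 f0 f1 f2 := by
  obtain ⟨c0, c1, c2, c3, c4⟩ := Qsol_coeff fm2 fm1 f0 f1 f2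
  refine ⟨?_, ?_, ?_, ?_, ?_⟩ <;>
  · rw [integral_poly5 _ (Qsol_natDegree fm2 fm1 f0 f1 f2), c0, c1, c2, c3, c4]
    ring

private lemma key_subst (P : Polynomial ℝ) {Δx : ℝ} (hne : Δx ≠ 0) (xi a b : ℝ) :
    ∫ t in a..b, (P.comp (C xi + C Δx * X)).eval t
      = (1/Δx) * ∫ ξ in (Δx*a+xi)..(Δx*b+xi), P.eval ξ := by
  have h2 : ∀ t : ℝ, (P.comp (C xi + C Δx * X)).eval t = P.eval (Δx * t + xi) := by
    intro t
    rw [Polynomial.eval_comp]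
    congr 1
    simp
    ring
  simp only [h2]
  rw [intervalIntegral.integral_comp_mul_add (fun ξ => P.eval ξ) hne xi]
  simp [smul_eq_mul, one_div]

private lemma lin_comp_lin (d c e k : ℝ) :
    ((C d + C c * X).comp (C e + C k * X) : Polynomial ℝ)
      = C (d + c*e) + C (c*k) * X := by
  simp only [Polynomial.add_comp, Polynomial.mul_comp, Polynomial.C_comp, Polynomial.X_comp,
    mul_add, ← mul_assoc, ← Polynomial.C_mul, ← add_assoc, ← Polynomial.C_add]

/-- There is a unique polynomial of degree at most `4` matching the five
prescribed cell averages, and any such polynomial evaluates at the right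
interface `x_i + Δx/2` to the five-point linear WENO flux formula. -/
theorem weno5_degree_four_reconstruction (fm2 fm1 f0 f1 f2 xi Δx : ℝ) (hΔx : 0 < Δx) :
    (∃! P : Polynomial ℝ, P.degree ≤ 4 ∧ MatchesCellAverages P fm2 fm1 f0 f1 f2 xi Δx)
    ∧ (∀ P : Polynomial ℝ, P.degree ≤ 4 → MatchesCellAverages P fm2 fm1 f0 f1 f2 xi Δx →
        P.eval (xi + Δx/2) = (1/60) * (2*fm2 - 13*fm1 + 47*f0 + 27*f1 - 3*f2)) := by
  have hne : Δx ≠ 0 := ne_of_gt hΔx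
  have hne' : (Δx)⁻¹ ≠ 0 := inv_ne_zero hne
  set L : Polynomial ℝ := C xi + C Δx * X with hL
  set L' : Polynomial ℝ := C (-(xi/Δx)) + C Δx⁻¹ * X with hL'
  have hdegL : ∀ P : Polynomial ℝ, (P.comp L).natDegree = P.natDegree := by
    intro P
    rw [Polynomial.natDegree_comp, hL, add_comm (C xi), Polynomial.natDegree_linear hne, mul_one]
  have hdegL' : ∀ P : Polynomial ℝ, (P.comp L').natDegree = P.natDegree := by
    intro P
    rw [Polynomial.natDegree_comp, hL', add_comm (C (-(xi/Δx))),
      Polynomial.natDegree_linear hne', mul_one]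
  have hLL' : L.comp L' = X := by
    rw [hL, hL', lin_comp_lin, show xi + Δx * -(xi/Δx) = 0 by field_simp; ring,
      mul_inv_cancel₀ hne]
    simp
  have hL'L : L'.comp L = X := by
    rw [hL, hL', lin_comp_lin, show -(xi/Δx) + Δx⁻¹ * xi = 0 by field_simp; ring,
      inv_mul_cancel₀ hne]
    simp
  have hinv : ∀ P : Polynomial ℝ, (P.comp L).comp L' = P := fun P => by
    rw [Polynomial.comp_assoc, hLL', Polynomial.comp_X]
  have hinv' : ∀ Q : Polynomial ℝ, (Q.comp L').comp L = Q := fun Q => by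
    rw [Polynomial.comp_assoc, hL'L, Polynomial.comp_X]
  have degiff : ∀ P : Polynomial ℝ, P.degree ≤ 4 ↔ P.natDegree < 5 := by
    intro P
    rw [show ((4:WithBot ℕ)) = ((4:ℕ):WithBot ℕ) by norm_cast, ← Polynomial.natDegree_le_iff_degree_le]
    omega
  have bridge : ∀ P : Polynomial ℝ,
      MatchesCellAverages P fm2 fm1 f0 f1 f2 xi Δx ↔ NM (P.comp L) fm2 fm1 f0 f1 f2 := by
    intro P
    unfold MatchesCellAverages NM
    rw [key_subst P hne xi, key_subst P hne xi, key_subst P hne xi, key_subst P hne xi,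
      key_subst P hne xi,
      show Δx * (-(5:ℝ)/2) + xi = xi + ((-2:ℝ) - 1/2)*Δx by ring,
      show Δx * (-(3:ℝ)/2) + xi = xi + ((-2:ℝ) + 1/2)*Δx by ring,
      show Δx * (-(1:ℝ)/2) + xi = xi + ((0:ℝ) - 1/2)*Δx by ring,
      show Δx * ((1:ℝ)/2) + xi = xi + ((0:ℝ) + 1/2)*Δx by ring,
      show Δx * ((3:ℝ)/2) + xi = xi + ((1:ℝ) + 1/2)*Δx by ring,
      show Δx * ((5:ℝ)/2) + xi = xi + ((2:ℝ) + 1/2)*Δx by ring,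
      show xi + ((-1:ℝ) - 1/2)*Δx = xi + ((-2:ℝ) + 1/2)*Δx by ring,
      show xi + ((-1:ℝ) + 1/2)*Δx = xi + ((0:ℝ) - 1/2)*Δx by ring,
      show xi + ((1:ℝ) - 1/2)*Δx = xi + ((0:ℝ) + 1/2)*Δx by ring,
      show xi + ((2:ℝ) - 1/2)*Δx = xi + ((1:ℝ) + 1/2)*Δx by ring]
  constructor
  · refine ⟨(Qsol fm2 fm1 f0 f1 f2).comp L', ⟨?_, ?_⟩, ?_⟩
    · rw [degiff, hdegL']
      exact Qsol_natDegree fm2 fm1 f0 f1 f2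
    · rw [bridge, hinv']
      exact Qsol_NM fm2 fm1 f0 f1 f2
    · rintro P ⟨hPdeg, hPm⟩
      have h1 : P.comp L = Qsol fm2 fm1 f0 f1 f2 :=
        NM_unique (by rw [hdegL]; exact (degiff P).mp hPdeg) (Qsol_natDegree fm2 fm1 f0 f1 f2)
          ((bridge P).mp hPm) (Qsol_NM fm2 fm1 f0 f1 f2)
      rw [← hinv P, h1]
  · intro P hPdeg hPm
    have hq : (P.comp L).natDegree < 5 := by rw [hdegL]; exact (degiff P).mp hPdeg
    have heval := NM_eval hq ((bridge P).mp hPm)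
    rw [Polynomial.eval_comp] at heval
    rw [show xi + Δx/2 = L.eval (1/2 : ℝ) by rw [hL]; simp; ring]
    exact heval
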